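/- For every r ≥ 3 and ℓ ≥ 0, the (r, ℓ)-chain has a set R of ℓ+1 vertices such that for every vertex v ∈ R, the graph obtained from the (r, ℓ)-chain by deleting v contains a K_r-factor; explicitly, R consists of the ℓ−1 identified (shared) degree-(r−1) vertices together with the two unidentified endpoints of the missing edges in the first and last copy of K_{r+1}^− (and R is the single vertex when ℓ = 0). -/

import Mathlib

/-!
Statement 12: for every `r ≥ 3` and `ℓ ≥ 0`, the `(r, ℓ)`-chain has a set `R` of
`ℓ + 1` vertices such that deleting any single vertex of `R` leaves a graph containing a
`K_r`-factor.  Explicitly (in the canonical labelling of the `(r, ℓ)`-chain on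
`{0, …, rℓ}`), `R` consists of the `ℓ - 1` identified (shared) degree-`(r-1)` vertices
together with the two unidentified endpoints of the missing edges in the first and last
copies of `K_{r+1}⁻` — i.e. of the multiples of `r` — and `R` is the single vertex of
the chain when `ℓ = 0`.
-/
open Finset

/-- The canonical `(r, ℓ)`-chain: the graph on vertex set `{0, 1, …, rℓ}` obtained by
sequentially gluing `ℓ` copies of `K_{r+1}⁻` (the complete graph on `r+1` vertices minus
one edge).  The `j`-th copy (for `0 ≤ j < ℓ`) lives on the vertices `{rj, …, r(j+1)}`,
its missing edge being `{rj, r(j+1)}`; consecutive copies are glued at the common vertex,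
which is a degree-`(r-1)` endpoint of the missing edge in both copies.  The `(r,0)`-chain
is a single vertex. -/
def chainGraph (r ℓ : ℕ) : SimpleGraph (Fin (r * ℓ + 1)) where
  Adj a b := a ≠ b ∧ ∃ j : ℕ, j < ℓ ∧
    r * j ≤ a.val ∧ a.val ≤ r * (j + 1) ∧ r * j ≤ b.val ∧ b.val ≤ r * (j + 1) ∧
    ¬(a.val = r * j ∧ b.val = r * (j + 1)) ∧ ¬(b.val = r * j ∧ a.val = r * (j + 1))
  symm := ⟨by
    rintro a b ⟨hne, j, hj, h1, h2, h3, h4, h5, h6⟩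
    exact ⟨hne.symm, j, hj, h3, h4, h1, h2, h6, h5⟩⟩
  loopless := ⟨by rintro a ⟨hne, -⟩; exact hne rfl⟩

/-- The set of removable vertices of the canonical `(r, ℓ)`-chain: the `ℓ - 1` shared
(identified) degree-`(r-1)` vertices together with the two unidentified endpoints of the
missing edges of the first and last copy of `K_{r+1}⁻`; in the canonical labelling these
are exactly the multiples of `r`. -/
def chainR (r ℓ : ℕ) : Finset (Fin (r * ℓ + 1)) :=
  Finset.univ.filter (fun v => r ∣ v.val)

/-- `φ` is an embedding of the `(r, ℓ)`-chain into `G` as a subgraph (a copy of the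
`(r, ℓ)`-chain in `G`). -/
def IsChainEmb {V : Type} (G : SimpleGraph V) (r ℓ : ℕ) (φ : Fin (r * ℓ + 1) → V) : Prop :=
  Function.Injective φ ∧ ∀ a b, (chainGraph r ℓ).Adj a b → G.Adj (φ a) (φ b)

/-- The subgraph of `G` induced by the vertex set `U` contains a `K_r`-factor. -/
def HasKrFactorOn {V : Type} [DecidableEq V] (G : SimpleGraph V) (r : ℕ)
    (U : Finset V) : Prop :=
  ∃ P : Finset (Finset V),
    (∀ S ∈ P, G.IsNClique r S) ∧
    (∀ S ∈ P, ∀ T ∈ P, S ≠ T → Disjoint S T) ∧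
    P.biUnion id = U

def chainOff (r k j : ℕ) : ℕ := r * j + (if j < k then 0 else 1)

def chainBlk (r ℓ k j : ℕ) : Finset (Fin (r * ℓ + 1)) :=
  Finset.univ.filter (fun v => chainOff r k j ≤ v.val ∧ v.val < chainOff r k j + r)

lemma mem_chainBlk {r ℓ k j : ℕ} {v : Fin (r * ℓ + 1)} :
    v ∈ chainBlk r ℓ k j ↔ chainOff r k j ≤ v.val ∧ v.val < chainOff r k j + r := by
  simp [chainBlk]

lemma chainOff_bounds {r k j : ℕ} :
    r * j ≤ chainOff r k j ∧ chainOff r k j ≤ r * j + 1 := by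
  unfold chainOff; split_ifs <;> omega

lemma chainBlk_card {r ℓ k j : ℕ} (hr : 1 ≤ r) (hj : j < ℓ) :
    (chainBlk r ℓ k j).card = r := by
  have hb := @chainOff_bounds r k j
  have hmul : r * (j + 1) ≤ r * ℓ := Nat.mul_le_mul_left r hj
  have he : r * (j + 1) = r * j + r := by ring
  have hle : chainOff r k j + r ≤ r * ℓ + 1 := by omega
  have himg : (chainBlk r ℓ k j).image Fin.val
      = Finset.Ico (chainOff r k j) (chainOff r k j + r) := by
    ext m
    simp only [mem_image, mem_Ico]
    constructor
    · rintro ⟨v, hv, rfl⟩; exact (mem_chainBlk.1 hv)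
    · rintro ⟨h1, h2⟩
      exact ⟨⟨m, by omega⟩, mem_chainBlk.2 ⟨h1, h2⟩, rfl⟩
  have := Finset.card_image_of_injective (chainBlk r ℓ k j) Fin.val_injective
  rw [himg] at this
  simp [Nat.card_Ico] at this
  omega

lemma chainBlk_clique {r ℓ k : ℕ} (hr : 1 ≤ r) {j : ℕ} (hj : j < ℓ) :
    (chainGraph r ℓ).IsNClique r (chainBlk r ℓ k j) := by
  constructor
  · intro a ha b hb hne
    rw [Finset.mem_coe, mem_chainBlk] at ha hb
    refine ⟨hne, j, hj, ?_⟩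
    have he : r * (j + 1) = r * j + r := by ring
    have hvne : a.val ≠ b.val := fun h => hne (Fin.ext h)
    unfold chainOff at ha hb
    split_ifs at ha hb <;> omega
  · exact chainBlk_card hr hj

lemma chainBlk_disjoint {r ℓ k : ℕ} {j1 j2 : ℕ} (h12 : j1 < j2) :
    Disjoint (chainBlk r ℓ k j1) (chainBlk r ℓ k j2) := by
  rw [Finset.disjoint_left]
  intro v hv1 hv2
  rw [mem_chainBlk] at hv1 hv2
  have hmul : r * (j1 + 1) ≤ r * j2 := Nat.mul_le_mul_left r h12
  have he : r * (j1 + 1) = r * j1 + r := by ring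
  unfold chainOff at hv1 hv2
  split_ifs at hv1 hv2 with h1 h2 h2 <;> omega

lemma chainBlk_union {r ℓ k : ℕ} (hr : 1 ≤ r) (hk : k ≤ ℓ) {v : Fin (r * ℓ + 1)}
    (hv : v.val ≠ r * k) : ∃ j, j < ℓ ∧ v ∈ chainBlk r ℓ k j := by
  by_cases hdvd : r ∣ v.val
  · obtain ⟨m, hm⟩ := hdvd
    have hml : m ≤ ℓ := by
      by_contra h
      have : r * (ℓ + 1) ≤ r * m := Nat.mul_le_mul_left r (by omega)
      have hlt := v.isLt
      have : r * (ℓ + 1) = r * ℓ + r := by ring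
      omega
    have hmk : m ≠ k := fun h => hv (by rw [hm, h])
    rcases lt_or_gt_of_ne hmk with hlt | hgt
    · refine ⟨m, by omega, mem_chainBlk.2 ?_⟩
      unfold chainOff
      rw [if_pos hlt]
      omega
    · refine ⟨m - 1, by omega, mem_chainBlk.2 ?_⟩
      unfold chainOff
      rw [if_neg (by omega)]
      have : r * (m - 1) + r = r * m := by
        have : m - 1 + 1 = m := by omega
        calc r * (m - 1) + r = r * (m - 1 + 1) := by ring
        _ = r * m := by rw [this]
      omega
  · refine ⟨v.val / r, ?_, mem_chainBlk.2 ?_⟩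
    · have h1 : r * (v.val / r) ≤ v.val := Nat.mul_div_le _ _
      have h2 : v.val % r ≠ 0 := fun h => hdvd (Nat.dvd_of_mod_eq_zero h)
      have h3 : v.val ≤ r * ℓ := by omega
      by_contra h
      have : ℓ ≤ v.val / r := by omega
      have : r * ℓ ≤ r * (v.val / r) := Nat.mul_le_mul_left r this
      have h4 := Nat.mod_lt v.val (show 0 < r by omega)
      have h5 := Nat.div_add_mod v.val r
      omega
    · have h1 := Nat.div_add_mod v.val r
      have h4 := Nat.mod_lt v.val (show 0 < r by omega)
      have h2 : v.val % r ≠ 0 := fun h => hdvd (Nat.dvd_of_mod_eq_zero h)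
      unfold chainOff
      split_ifs <;> omega

lemma chainR_card {r ℓ : ℕ} (hr : 1 ≤ r) : (chainR r ℓ).card = ℓ + 1 := by
  have himg : (chainR r ℓ).image Fin.val = (Finset.range (ℓ + 1)).image (fun m => r * m) := by
    ext n
    simp only [mem_image, mem_range, chainR, mem_filter, mem_univ, true_and]
    constructor
    · rintro ⟨v, ⟨m, hm⟩, rfl⟩
      refine ⟨m, ?_, hm.symm⟩
      have hlt := v.isLt
      by_contra h
      have : r * (ℓ + 1) ≤ r * m := Nat.mul_le_mul_left r (by omega)
      have he : r * (ℓ + 1) = r * ℓ + r := by ring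
      omega
    · rintro ⟨m, hm, rfl⟩
      have : r * m ≤ r * ℓ := Nat.mul_le_mul_left r (by omega)
      exact ⟨⟨r * m, by omega⟩, ⟨m, rfl⟩, rfl⟩
  have h1 := Finset.card_image_of_injective (chainR r ℓ) Fin.val_injective
  have h2 := Finset.card_image_of_injective (Finset.range (ℓ + 1))
    (mul_right_injective₀ (show r ≠ 0 by omega))
  rw [himg, h2, Finset.card_range] at h1
  exact h1.symm


theorem statement_12aux :
    ∀ r ℓ : ℕ, 3 ≤ r →
      (chainR r ℓ).card = ℓ + 1 ∧
      ∀ v ∈ chainR r ℓ,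
        HasKrFactorOn (chainGraph r ℓ) r (Finset.univ.erase v) := by
  intro r ℓ hr
  have hr1 : 1 ≤ r := by omega
  refine ⟨chainR_card hr1, ?_⟩
  intro v hv
  obtain ⟨k, hk⟩ : r ∣ v.val := (Finset.mem_filter.1 hv).2
  have hkl : k ≤ ℓ := by
    have hlt := v.isLt
    by_contra h
    have : r * (ℓ + 1) ≤ r * k := Nat.mul_le_mul_left r (by omega)
    have he : r * (ℓ + 1) = r * ℓ + r := by ring
    omega
  refine ⟨(Finset.range ℓ).image (chainBlk r ℓ k), ?_, ?_, ?_⟩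
  · intro S hS
    obtain ⟨j, hj, rfl⟩ := Finset.mem_image.1 hS
    exact chainBlk_clique hr1 (Finset.mem_range.1 hj)
  · intro S hS T hT hST
    obtain ⟨j1, hj1, rfl⟩ := Finset.mem_image.1 hS
    obtain ⟨j2, hj2, rfl⟩ := Finset.mem_image.1 hT
    rcases lt_trichotomy j1 j2 with h | h | h
    · exact chainBlk_disjoint h
    · exact absurd (by rw [h]) hST
    · exact (chainBlk_disjoint h).symm
  · ext w
    simp only [Finset.mem_biUnion, Finset.mem_image, id, Finset.mem_erase, Finset.mem_univ,
      and_true]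
    constructor
    · rintro ⟨S, ⟨j, hj, rfl⟩, hw⟩
      rw [mem_chainBlk] at hw
      have hb := @chainOff_bounds r k j
      intro hwv
      rw [hwv] at hw
      rw [hk] at hw
      have hjr := Finset.mem_range.1 hj
      unfold chainOff at hw
      have he : r * (j + 1) = r * j + r := by ring
      split_ifs at hw with h
      · have : r * (k) ≥ r * (j + 1) := Nat.mul_le_mul_left r (by omega)
        omega
      · have : r * j ≥ r * k := Nat.mul_le_mul_left r (by omega)
        omega
    · intro hwv
      have hne : w.val ≠ r * k := by
        rw [← hk]; exact fun h => hwv (Fin.ext h)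
      obtain ⟨j, hj, hmem⟩ := chainBlk_union hr1 hkl hne
      exact ⟨chainBlk r ℓ k j, ⟨j, Finset.mem_range.2 hj, rfl⟩, hmem⟩

theorem statement_12 :
    ∀ r ℓ : ℕ, 3 ≤ r →
      (chainR r ℓ).card = ℓ + 1 ∧
      ∀ v ∈ chainR r ℓ,
        HasKrFactorOn (chainGraph r ℓ) r (Finset.univ.erase v) := by
  exact statement_12aux
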